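/- Let {f_1, f_2} be a geometrically fast set of positive bumps on [0,1] with markers c_1, c_2 whose feet L_1 = (a_1,c_1), R_1 = [f_1(c_1),b_1), L_2 = (a_2,c_2), R_2 = [f_2(c_2),b_2) are pairwise disjoint and ordered L_1 < L_2 < R_1 < R_2. Then the subgroup of Homeo_+([0,1]) generated by {f_1, f_2} is isomorphic to Thompson's group F, i.e. to the group presented by two generators x_0, x_1 subject to the two relations [x_0 x_1^{-1}, x_0^{-1} x_1 x_0] = 1 and [x_0 x_1^{-1}, x_0^{-2} x_1 x_0^{2}] = 1. -/

import Mathlib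

/-- The group of orientation-preserving homeomorphisms of `[0,1]`, modeled as
order-isomorphisms of the unit interval. -/
abbrev Homeo := unitInterval ≃o unitInterval

/-- `f` is a positive bump with orbital `(a,b)`. -/
def IsPosBump (f : Homeo) (a b : ℝ) : Prop :=
  0 ≤ a ∧ a < b ∧ b ≤ 1 ∧
  (∀ x : unitInterval, (x : ℝ) ≤ (f x : ℝ)) ∧
  (∀ x : unitInterval, f x ≠ x ↔ a < (x : ℝ) ∧ (x : ℝ) < b)

/-- `J` precedes `J'`: every point of `J` is less than every point of `J'`. -/
def Precedes (J J' : Set ℝ) : Prop := ∀ x ∈ J, ∀ y ∈ J', x < y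

/-- The two defining relators of Thompson's group `F`:
`[x₀x₁⁻¹, x₀⁻¹x₁x₀]` and `[x₀x₁⁻¹, x₀⁻²x₁x₀²]`, where `[g,h] = g⁻¹h⁻¹gh`. -/
def thompsonFRels : Set (FreeGroup (Fin 2)) :=
  letI x₀ : FreeGroup (Fin 2) := FreeGroup.of 0
  letI x₁ : FreeGroup (Fin 2) := FreeGroup.of 1
  letI g : FreeGroup (Fin 2) := x₀ * x₁⁻¹
  { g⁻¹ * (x₀⁻¹ * x₁ * x₀)⁻¹ * g * (x₀⁻¹ * x₁ * x₀),
    g⁻¹ * (x₀⁻¹ ^ 2 * x₁ * x₀ ^ 2)⁻¹ * g * (x₀⁻¹ ^ 2 * x₁ * x₀ ^ 2) }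

namespace TF

abbrev F := PresentedGroup thompsonFRels

def a : F := PresentedGroup.of 0
def b : F := PresentedGroup.of 1

/-- `x n` : the standard generators x₀, x₁, x₂ = x₀⁻¹x₁x₀, ... -/
def x : ℕ → F
  | 0 => a
  | 1 => b
  | (n+2) => a⁻¹ * x (n+1) * a

lemma x_zero : x 0 = a := rfl
lemma x_one : x 1 = b := rfl
lemma x_succ {n : ℕ} (h : 1 ≤ n) : x (n+1) = a⁻¹ * x n * a := by
  rcases n with _ | n
  · omega
  · rfl

lemma rel_mem (r : FreeGroup (Fin 2)) (hr : r ∈ thompsonFRels) :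
    PresentedGroup.mk thompsonFRels r = 1 :=
  (QuotientGroup.eq_one_iff r).mpr (Subgroup.subset_normalClosure hr)

lemma rel1 : (a * b⁻¹) * (a⁻¹ * b * a) = (a⁻¹ * b * a) * (a * b⁻¹) := by
  have h := rel_mem _ (Set.mem_insert _ _)
  have h1 : ((a*b⁻¹)⁻¹ * (a⁻¹ * b * a)⁻¹ * (a*b⁻¹) * (a⁻¹ * b * a) : F) = 1 := by
    simpa [a, b, PresentedGroup.of, map_mul, map_inv] using h
  calc (a * b⁻¹) * (a⁻¹ * b * a)
      = ((a⁻¹ * b * a) * (a * b⁻¹)) * ((a*b⁻¹)⁻¹ * (a⁻¹ * b * a)⁻¹ * (a*b⁻¹) * (a⁻¹ * b * a)) := by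
        group
    _ = (a⁻¹ * b * a) * (a * b⁻¹) := by rw [h1]; group

lemma rel2 : (a * b⁻¹) * (a⁻¹ * (a⁻¹ * b * a) * a) = (a⁻¹ * (a⁻¹ * b * a) * a) * (a * b⁻¹) := by
  have h := rel_mem _ (Set.mem_insert_of_mem _ rfl)
  have h1 : ((a*b⁻¹)⁻¹ * (a⁻¹*a⁻¹ * b * (a*a))⁻¹ * (a*b⁻¹) * (a⁻¹*a⁻¹ * b * (a*a)) : F) = 1 := by
    simpa [a, b, PresentedGroup.of, map_mul, map_inv, pow_two] using h
  calc (a * b⁻¹) * (a⁻¹ * (a⁻¹ * b * a) * a)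
      = ((a⁻¹ * (a⁻¹ * b * a) * a) * (a * b⁻¹)) *
        ((a*b⁻¹)⁻¹ * (a⁻¹*a⁻¹ * b * (a*a))⁻¹ * (a*b⁻¹) * (a⁻¹*a⁻¹ * b * (a*a))) := by group
    _ = (a⁻¹ * (a⁻¹ * b * a) * a) * (a * b⁻¹) := by rw [h1]; group


/-- `C m`: the element `a * b⁻¹` commutes with `x m`. -/
def C (m : ℕ) : Prop := (a * b⁻¹) * x m = x m * (a * b⁻¹)

lemma C2 : C 2 := rel1
lemma C3 : C 3 := rel2

/-- From `C m` (m ≥ 1): conjugation by `b` equals conjugation by `a` on `x m`. -/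
lemma conj_b {m : ℕ} (h1 : 1 ≤ m) (hc : C m) : b⁻¹ * x m * b = x (m+1) := by
  rw [x_succ h1]
  -- from (a b⁻¹) x m = x m (a b⁻¹):  b⁻¹ x m b = a⁻¹ x m a
  have := hc
  unfold C at this
  calc b⁻¹ * x m * b = a⁻¹ * ((a * b⁻¹) * x m) * b := by group
    _ = a⁻¹ * (x m * (a * b⁻¹)) * b := by rw [this]
    _ = a⁻¹ * x m * a := by group

/-- For m ≥ 2 with `C (m-1)` : conjugation by `x 2` sends `x m` to `x (m+1)`. -/
lemma conj_x2 {m : ℕ} (h2 : 2 ≤ m) (hc : C (m-1)) : (x 2)⁻¹ * x m * x 2 = x (m+1) := by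
  obtain ⟨k, rfl⟩ : ∃ k, m = k + 2 := ⟨m - 2, by omega⟩
  have hprev : b⁻¹ * x (k+1) * b = x (k+2) := conj_b (by omega) (by simpa using hc)
  show (x 2)⁻¹ * x (k+2) * x 2 = x (k+3)
  have e1 : x (k+2) = a⁻¹ * x (k+1) * a := rfl
  have e2 : x (k+3) = a⁻¹ * x (k+2) * a := rfl
  have e3 : x 2 = a⁻¹ * b * a := rfl
  rw [e2, e3, e1]
  calc (a⁻¹*b*a)⁻¹ * (a⁻¹ * x (k+1) * a) * (a⁻¹*b*a)
      = a⁻¹ * (b⁻¹ * x (k+1) * b) * a := by group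
    _ = a⁻¹ * (a⁻¹ * x (k+1) * a) * a := by rw [hprev, e1]

lemma commute_of_C {m : ℕ} (h : C m) : Commute (a * b⁻¹) (x m) := h

lemma Call : ∀ m, 2 ≤ m → C m := by
  have key : ∀ k, C (k+2) ∧ C (k+3) := by
    intro k
    induction k with
    | zero => exact ⟨C2, C3⟩
    | succ n ih =>
      refine ⟨ih.2, ?_⟩
      have hconj : (x 2)⁻¹ * x (n+3) * x 2 = x (n+4) :=
        conj_x2 (by omega) (by simpa using ih.1)
      have c2 : Commute (a*b⁻¹) (x 2) := C2
      have c3 : Commute (a*b⁻¹) (x (n+3)) := ih.2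
      have : Commute (a*b⁻¹) ((x 2)⁻¹ * x (n+3) * x 2) :=
        (c2.inv_right.mul_right c3).mul_right c2
      rw [hconj] at this
      exact this
  intro m hm
  obtain ⟨k, rfl⟩ : ∃ k, m = k + 2 := ⟨m - 2, by omega⟩
  exact (key k).1

/-- `x m * b = b * x (m+1)` for `m ≥ 2`. -/
lemma swap_b {m : ℕ} (hm : 2 ≤ m) : x m * b = b * x (m+1) := by
  have := conj_b (by omega : 1 ≤ m) (Call m hm)
  calc x m * b = b * (b⁻¹ * x m * b) := by group
    _ = b * x (m+1) := by rw [this]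

/-- `x (n+j) = a⁻ʲ x n aʲ` for `n ≥ 1`. -/
lemma x_add (j : ℕ) {n : ℕ} (hn : 1 ≤ n) : x (n + j) = (a^j)⁻¹ * x n * a^j := by
  induction j with
  | zero => simp
  | succ k ih =>
    have : n + (k+1) = (n + k) + 1 := by omega
    rw [this, x_succ (by omega : 1 ≤ n + k), ih]
    rw [pow_succ]
    group

/-- The key relation: for `h < k`, `x k * x h = x h * x (k+1)`. -/
lemma swap {h k : ℕ} (hlt : h < k) : x k * x h = x h * x (k+1) := by
  rcases h with _ | j
  · -- h = 0 : from definition x (k+1) = a⁻¹ * x k * a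
    have := x_succ (by omega : 1 ≤ k)
    rw [x_zero, this]
    group
  · -- h = j+1 ≥ 1
    have hxh : x (j+1) = (a^j)⁻¹ * b * a^j := by
      have := x_add j (le_refl 1)
      simpa [x_one, Nat.add_comm] using this
    obtain ⟨d, rfl⟩ : ∃ d, k = (d + 2) + j := ⟨k - j - 2, by omega⟩
    have hxk : x ((d+2) + j) = (a^j)⁻¹ * x (d+2) * a^j := x_add j (by omega)
    have hxk1 : x ((d+2) + j + 1) = (a^j)⁻¹ * x (d+3) * a^j := by
      have := x_add j (by omega : 1 ≤ d + 3)
      rw [show d + 3 + j = d + 2 + j + 1 by omega] at this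
      exact this
    have hsb : x (d+2) * b = b * x (d+3) := swap_b (by omega)
    rw [hxh, hxk, hxk1]
    calc (a^j)⁻¹ * x (d+2) * a^j * ((a^j)⁻¹ * b * a^j)
        = (a^j)⁻¹ * (x (d+2) * b) * a^j := by group
      _ = (a^j)⁻¹ * (b * x (d+3)) * a^j := by rw [hsb]
      _ = (a^j)⁻¹ * b * a^j * ((a^j)⁻¹ * x (d+3) * a^j) := by group


/-! ### Positive words -/

/-- Product of the generators indexed by a list. -/
def w (l : List ℕ) : F := (l.map x).prod

@[simp] lemma w_nil : w [] = 1 := rfl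
@[simp] lemma w_cons (k : ℕ) (l : List ℕ) : w (k :: l) = x k * w l := by
  simp [w]
@[simp] lemma w_append (l₁ l₂ : List ℕ) : w (l₁ ++ l₂) = w l₁ * w l₂ := by
  simp [w]

/-- Insertion into a sorted word, adjusting indices via the relations. -/
def ins (k : ℕ) : List ℕ → List ℕ
  | [] => [k]
  | h :: t => if k ≤ h then k :: h :: t else h :: ins (k+1) t

lemma ins_mem {m k : ℕ} : ∀ {l : List ℕ}, m ∈ ins k l → (k ≤ m ∨ m ∈ l) := by
  intro l
  induction l generalizing k with
  | nil => intro h; simp [ins] at h; omega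
  | cons hd t ih =>
    intro hm
    simp only [ins] at hm
    split_ifs at hm with hk
    · rcases List.mem_cons.mp hm with h | h
      · omega
      · right; exact h
    · rcases List.mem_cons.mp hm with h | h
      · right; simp [h]
      · rcases ih h with h' | h'
        · left; omega
        · right; simp [h']

lemma ins_sorted {k : ℕ} {l : List ℕ} (hl : l.Pairwise (· ≤ ·)) :
    (ins k l).Pairwise (· ≤ ·) := by
  induction l generalizing k with
  | nil => simp [ins]
  | cons hd t ih =>
    rw [List.pairwise_cons] at hl
    simp only [ins]
    split_ifs with hk
    · refine List.pairwise_cons.mpr ⟨?_, List.pairwise_cons.mpr hl⟩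
      intro m hm
      rcases List.mem_cons.mp hm with h | h
      · omega
      · exact le_trans hk (hl.1 m h)
    · refine List.pairwise_cons.mpr ⟨?_, ih hl.2⟩
      intro m hm
      rcases ins_mem hm with h | h
      · omega
      · exact hl.1 m h

lemma w_ins (k : ℕ) (l : List ℕ) : w (ins k l) = x k * w l := by
  induction l generalizing k with
  | nil => simp [ins]
  | cons hd t ih =>
    simp only [ins]
    split_ifs with hk
    · simp
    · rw [w_cons, ih (k+1), w_cons, ← mul_assoc, ← mul_assoc, swap (by omega : hd < k)]

/-- Sorting a word using the relations. -/
def sortW : List ℕ → List ℕ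
  | [] => []
  | h :: t => ins h (sortW t)

lemma sortW_sorted (l : List ℕ) : (sortW l).Pairwise (· ≤ ·) := by
  induction l with
  | nil => simp [sortW]
  | cons h t ih => exact ins_sorted ih

lemma w_sortW (l : List ℕ) : w (sortW l) = w l := by
  induction l with
  | nil => rfl
  | cons h t ih => rw [sortW, w_ins, ih, w_cons]

/-! ### Every element is a fraction of positive words -/

lemma swap_inv_lt {h k : ℕ} (hlt : h < k) : (x k)⁻¹ * x h = x h * (x (k+1))⁻¹ := by
  rw [inv_mul_eq_iff_eq_mul, ← mul_assoc, swap hlt, mul_inv_cancel_right]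

lemma swap_inv_gt {h k : ℕ} (hlt : k < h) : (x k)⁻¹ * x h = x (h+1) * (x k)⁻¹ := by
  rw [inv_mul_eq_iff_eq_mul, ← mul_assoc, ← swap hlt, mul_inv_cancel_right]

/-- Dividing a positive word on the left by a single generator. -/
lemma LD1 : ∀ (l : List ℕ) (n : ℕ), ∃ p q : List ℕ, (x n)⁻¹ * w l = w p * (w q)⁻¹ := by
  intro l
  induction l with
  | nil => exact fun n => ⟨[], [n], by simp⟩
  | cons h t ih =>
    intro n
    rcases lt_trichotomy n h with hlt | heq | hgt
    · obtain ⟨p, q, hpq⟩ := ih n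
      exact ⟨(h+1) :: p, q, by rw [w_cons, ← mul_assoc, swap_inv_gt hlt, mul_assoc, hpq,
        w_cons, mul_assoc]⟩
    · subst heq
      exact ⟨t, [], by simp⟩
    · obtain ⟨p, q, hpq⟩ := ih (n+1)
      exact ⟨h :: p, q, by rw [w_cons, ← mul_assoc, swap_inv_lt hgt, mul_assoc, hpq,
        w_cons, mul_assoc]⟩

/-- Dividing a positive word on the left by (the inverse of) a positive word. -/
lemma LD : ∀ (q p : List ℕ), ∃ p' q' : List ℕ, (w q)⁻¹ * w p = w p' * (w q')⁻¹ := by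
  intro q
  induction q with
  | nil => exact fun p => ⟨p, [], by simp⟩
  | cons h t ih =>
    intro p
    obtain ⟨p₁, q₁, h1⟩ := LD1 p h
    obtain ⟨p₂, q₂, h2⟩ := ih p₁
    refine ⟨p₂, q₁ ++ q₂, ?_⟩
    calc (w (h :: t))⁻¹ * w p = (w t)⁻¹ * ((x h)⁻¹ * w p) := by
          rw [w_cons, mul_inv_rev, mul_assoc]
      _ = (w t)⁻¹ * (w p₁ * (w q₁)⁻¹) := by rw [h1]
      _ = ((w t)⁻¹ * w p₁) * (w q₁)⁻¹ := (mul_assoc _ _ _).symm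
      _ = (w p₂ * (w q₂)⁻¹) * (w q₁)⁻¹ := by rw [h2]
      _ = w p₂ * (w (q₁ ++ q₂))⁻¹ := by rw [w_append, mul_inv_rev]; group

/-- Every element of `F` is a fraction `w p * (w q)⁻¹` of positive words. -/
lemma frac (g : F) : ∃ p q : List ℕ, g = w p * (w q)⁻¹ := by
  let S : Subgroup F :=
    { carrier := {g | ∃ p q : List ℕ, g = w p * (w q)⁻¹}
      one_mem' := ⟨[], [], by simp⟩
      mul_mem' := by
        rintro g₁ g₂ ⟨p₁, q₁, rfl⟩ ⟨p₂, q₂, rfl⟩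
        obtain ⟨p', q', h⟩ := LD q₁ p₂
        refine ⟨p₁ ++ p', q₂ ++ q', ?_⟩
        rw [w_append, w_append, mul_inv_rev]
        rw [mul_assoc, ← mul_assoc ((w q₁)⁻¹), h]
        group
      inv_mem' := by
        rintro g ⟨p, q, rfl⟩
        exact ⟨q, p, by group⟩ }
  have : g ∈ S := by
    apply PresentedGroup.generated_by thompsonFRels S
    intro j
    fin_cases j
    · exact ⟨[0], [], by simp [x_zero, a, PresentedGroup.of]⟩
    · exact ⟨[1], [], by simp [x_one, b, PresentedGroup.of]⟩
  exact this

end TF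

/-! ### Bump dynamics -/

@[simp] lemma Homeo.mul_apply (u v : Homeo) (t : unitInterval) : (u * v) t = u (v t) := rfl

lemma Homeo.inv_apply_self' (u : Homeo) (t : unitInterval) : u⁻¹ (u t) = t :=
  RelIso.inv_apply_self u t

lemma Homeo.apply_inv_self' (u : Homeo) (t : unitInterval) : u (u⁻¹ t) = t :=
  RelIso.apply_inv_self u t

lemma Homeo.lt_iff_lt (u : Homeo) {s t : unitInterval} : u s < u t ↔ s < t :=
  (OrderIso.lt_iff_lt u)

lemma Homeo.le_iff_le (u : Homeo) {s t : unitInterval} : u s ≤ u t ↔ s ≤ t :=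
  (OrderIso.le_iff_le u)

lemma Homeo.injective (u : Homeo) : Function.Injective u := u.toEquiv.injective

namespace Bump

variable {f : Homeo} {A B : ℝ}

lemma ge (hf : IsPosBump f A B) (t : unitInterval) : t ≤ f t :=
  Subtype.coe_le_coe.mp (hf.2.2.2.1 t)

lemma ne_iff (hf : IsPosBump f A B) (t : unitInterval) :
    f t ≠ t ↔ A < (t : ℝ) ∧ (t : ℝ) < B := hf.2.2.2.2 t

lemma gt_iff (hf : IsPosBump f A B) (t : unitInterval) :
    t < f t ↔ A < (t : ℝ) ∧ (t : ℝ) < B := by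
  rw [← ne_iff hf t]
  constructor
  · intro h; exact (ne_of_gt h)
  · intro h; exact lt_of_le_of_ne (ge hf t) (Ne.symm h)

lemma fix_of_le (hf : IsPosBump f A B) {t : unitInterval} (h : (t : ℝ) ≤ A) : f t = t := by
  by_contra hne
  exact absurd ((ne_iff hf t).mp hne).1 (not_lt.mpr h)

lemma fix_of_ge (hf : IsPosBump f A B) {t : unitInterval} (h : B ≤ (t : ℝ)) : f t = t := by
  by_contra hne
  exact absurd ((ne_iff hf t).mp hne).2 (not_lt.mpr h)

lemma inv_le (hf : IsPosBump f A B) (t : unitInterval) : f⁻¹ t ≤ t := by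
  have := ge hf (f⁻¹ t)
  rwa [Homeo.apply_inv_self'] at this

lemma inv_fix_of_le (hf : IsPosBump f A B) {t : unitInterval} (h : (t : ℝ) ≤ A) : f⁻¹ t = t := by
  have h1 : ((f⁻¹ t : unitInterval) : ℝ) ≤ A := le_trans (Subtype.coe_le_coe.mpr (inv_le hf t)) h
  have := fix_of_le hf h1
  rw [Homeo.apply_inv_self'] at this
  exact this.symm

lemma inv_fix_of_ge (hf : IsPosBump f A B) {t : unitInterval} (h : B ≤ (t : ℝ)) : f⁻¹ t = t := by
  have hB0 : 0 ≤ B := le_of_lt (lt_of_le_of_lt hf.1 hf.2.1)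
  set pB : unitInterval := ⟨B, hB0, hf.2.2.1⟩ with hpB
  have hfix : f pB = pB := fix_of_ge hf (le_refl _)
  by_contra hne
  have hlt : f⁻¹ t < t := lt_of_le_of_ne (inv_le hf t) (by exact fun e => hne e)
  have hpt : pB ≤ t := h
  have h2 : f⁻¹ t < pB ∨ pB ≤ f⁻¹ t := lt_or_ge _ _
  rcases h2 with h2 | h2
  · -- f (f⁻¹ t) < f pB = pB ≤ t, contradiction with f (f⁻¹ t) = t
    have := (Homeo.lt_iff_lt f).mpr h2
    rw [Homeo.apply_inv_self', hfix] at this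
    exact absurd hpt (not_le.mpr this)
  · -- pB ≤ f⁻¹ t so f fixes f⁻¹ t
    have := fix_of_ge hf (le_trans h2 (le_refl _) : B ≤ ((f⁻¹ t : unitInterval) : ℝ))
    rw [Homeo.apply_inv_self'] at this
    exact hne this.symm

end Bump

/-! ### The fast pair setup -/

structure Setup where
  f₁ : Homeo
  f₂ : Homeo
  a₁ : ℝ
  b₁ : ℝ
  a₂ : ℝ
  b₂ : ℝ
  c₁ : unitInterval
  c₂ : unitInterval
  hf₁ : IsPosBump f₁ a₁ b₁
  hf₂ : IsPosBump f₂ a₂ b₂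
  hc₁l : a₁ < (c₁ : ℝ)
  hc₁r : (c₁ : ℝ) < b₁
  hc₂l : a₂ < (c₂ : ℝ)
  hc₂r : (c₂ : ℝ) < b₂
  k1 : (c₁ : ℝ) ≤ a₂
  k2 : (c₂ : ℝ) ≤ ((f₁ c₁ : unitInterval) : ℝ)
  k3 : b₁ ≤ ((f₂ c₂ : unitInterval) : ℝ)

namespace Setup

variable (S : Setup)

/-- the big generator: `A = f₁ ∘ f₂`. -/
def A : Homeo := S.f₁ * S.f₂
/-- the small generator: `B = f₁`. -/
def B : Homeo := S.f₁

lemma a₁_nonneg : 0 ≤ S.a₁ := S.hf₁.1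
lemma a₁_lt_b₁ : S.a₁ < S.b₁ := S.hf₁.2.1
lemma b₁_le_one : S.b₁ ≤ 1 := S.hf₁.2.2.1
lemma a₂_nonneg : 0 ≤ S.a₂ := S.hf₂.1
lemma a₂_lt_b₂ : S.a₂ < S.b₂ := S.hf₂.2.1
lemma b₂_le_one : S.b₂ ≤ 1 := S.hf₂.2.2.1

def pa₁ : unitInterval := ⟨S.a₁, S.a₁_nonneg, le_trans (le_of_lt S.a₁_lt_b₁) S.b₁_le_one⟩
def pb₁ : unitInterval := ⟨S.b₁, le_trans S.a₁_nonneg (le_of_lt S.a₁_lt_b₁), S.b₁_le_one⟩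
def pa₂ : unitInterval := ⟨S.a₂, S.a₂_nonneg, le_trans (le_of_lt S.a₂_lt_b₂) S.b₂_le_one⟩
def pb₂ : unitInterval := ⟨S.b₂, le_trans S.a₂_nonneg (le_of_lt S.a₂_lt_b₂), S.b₂_le_one⟩

@[simp] lemma coe_pa₁ : ((S.pa₁ : unitInterval) : ℝ) = S.a₁ := rfl
@[simp] lemma coe_pb₁ : ((S.pb₁ : unitInterval) : ℝ) = S.b₁ := rfl
@[simp] lemma coe_pa₂ : ((S.pa₂ : unitInterval) : ℝ) = S.a₂ := rfl
@[simp] lemma coe_pb₂ : ((S.pb₂ : unitInterval) : ℝ) = S.b₂ := rfl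

lemma f₁c₁_lt_b₁ : ((S.f₁ S.c₁ : unitInterval) : ℝ) < S.b₁ := by
  have h1 : S.c₁ < S.pb₁ := by
    rw [← Subtype.coe_lt_coe, coe_pb₁]; exact S.hc₁r
  have := (Homeo.lt_iff_lt S.f₁).mpr h1
  rw [Bump.fix_of_ge S.hf₁ (t := S.pb₁) (le_refl _)] at this
  exact this

lemma f₂c₂_lt_b₂ : ((S.f₂ S.c₂ : unitInterval) : ℝ) < S.b₂ := by
  have h1 : S.c₂ < S.pb₂ := by
    rw [← Subtype.coe_lt_coe, coe_pb₂]; exact S.hc₂r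
  have := (Homeo.lt_iff_lt S.f₂).mpr h1
  rw [Bump.fix_of_ge S.hf₂ (t := S.pb₂) (le_refl _)] at this
  exact this

lemma a₁_lt_a₂ : S.a₁ < S.a₂ := lt_of_lt_of_le S.hc₁l S.k1
lemma a₂_lt_b₁ : S.a₂ < S.b₁ := lt_of_lt_of_le S.hc₂l (le_trans S.k2 (le_of_lt S.f₁c₁_lt_b₁))
lemma b₁_lt_b₂ : S.b₁ < S.b₂ := lt_of_le_of_lt S.k3 S.f₂c₂_lt_b₂
lemma a₁_lt_b₂ : S.a₁ < S.b₂ := lt_trans S.a₁_lt_a₂ (lt_trans S.a₂_lt_b₁ S.b₁_lt_b₂)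

/-- `A` is a positive bump with orbital `(a₁, b₂)`. -/
lemma A_ge (t : unitInterval) : t ≤ S.A t := by
  unfold A
  rw [Homeo.mul_apply]
  exact le_trans (Bump.ge S.hf₂ t) (Bump.ge S.hf₁ _)

lemma A_gt_iff (t : unitInterval) : t < S.A t ↔ S.a₁ < (t : ℝ) ∧ (t : ℝ) < S.b₂ := by
  unfold A
  rw [Homeo.mul_apply]
  constructor
  · intro h
    rcases lt_or_eq_of_le (Bump.ge S.hf₂ t) with h2 | h2
    · have := (Bump.gt_iff S.hf₂ t).mp h2
      constructor
      · exact lt_trans S.a₁_lt_a₂ this.1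
      · exact this.2
    · rw [← h2] at h
      have := (Bump.gt_iff S.hf₁ t).mp h
      constructor
      · exact this.1
      · exact lt_trans this.2 S.b₁_lt_b₂
  · rintro ⟨h1, h2⟩
    rcases le_or_gt (t : ℝ) S.a₂ with h3 | h3
    · -- f₂ fixes t, f₁ moves t since a₁ < t ≤ a₂ < b₁
      rw [Bump.fix_of_le S.hf₂ h3]
      exact (Bump.gt_iff S.hf₁ t).mpr ⟨h1, lt_of_le_of_lt h3 S.a₂_lt_b₁⟩
    · have hmove : t < S.f₂ t := (Bump.gt_iff S.hf₂ t).mpr ⟨h3, h2⟩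
      exact lt_of_lt_of_le hmove (Bump.ge S.hf₁ _)

lemma A_fix_of_le {t : unitInterval} (h : (t : ℝ) ≤ S.a₁) : S.A t = t := by
  unfold A
  rw [Homeo.mul_apply, Bump.fix_of_le S.hf₂ (le_trans h (le_of_lt S.a₁_lt_a₂)),
    Bump.fix_of_le S.hf₁ h]

lemma A_fix_of_ge {t : unitInterval} (h : S.b₂ ≤ (t : ℝ)) : S.A t = t := by
  unfold A
  rw [Homeo.mul_apply, Bump.fix_of_ge S.hf₂ h,
    Bump.fix_of_ge S.hf₁ (le_trans (le_of_lt S.b₁_lt_b₂) h)]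

lemma A_eq_iff (t : unitInterval) : S.A t = t ↔ ¬ (S.a₁ < (t : ℝ) ∧ (t : ℝ) < S.b₂) := by
  constructor
  · intro h hcon
    have := (S.A_gt_iff t).mpr hcon
    rw [h] at this
    exact lt_irrefl _ this
  · intro h
    rcases lt_or_eq_of_le (S.A_ge t) with h2 | h2
    · exact absurd ((S.A_gt_iff t).mp h2) h
    · exact h2.symm

lemma Ainv_le (t : unitInterval) : S.A⁻¹ t ≤ t := by
  have := S.A_ge (S.A⁻¹ t)
  rwa [Homeo.apply_inv_self'] at this

lemma A_fix_pa₁ : S.A S.pa₁ = S.pa₁ := S.A_fix_of_le (le_refl _)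

lemma Ainv_fix_pa₁ : S.A⁻¹ S.pa₁ = S.pa₁ := by
  have := congrArg (fun z => S.A⁻¹ z) S.A_fix_pa₁
  simp only [Homeo.inv_apply_self'] at this
  exact this.symm

/-- The right endpoints of the supports of the conjugated bumps. -/
def β : ℕ → unitInterval
  | 0 => S.pb₂
  | 1 => S.pb₁
  | (n+2) => S.A⁻¹ (β (n+1))

/-- The sequence of images of the generators `x n`. -/
def Bh : ℕ → Homeo
  | 0 => S.A
  | 1 => S.B
  | (n+2) => S.A⁻¹ * Bh (n+1) * S.A

lemma β_zero : S.β 0 = S.pb₂ := rfl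
lemma β_one : S.β 1 = S.pb₁ := rfl
lemma β_succ {n : ℕ} (h : 1 ≤ n) : S.β (n+1) = S.A⁻¹ (S.β n) := by
  rcases n with _ | n
  · omega
  · rfl

lemma β_gt_a₁ : ∀ n, S.a₁ < (S.β n : ℝ) := by
  intro n
  induction n with
  | zero => exact S.a₁_lt_b₂
  | succ m ih =>
    rcases m with _ | m
    · exact lt_of_lt_of_le S.a₁_lt_a₂ (le_of_lt (S.a₂_lt_b₁))
    · show S.a₁ < (S.A⁻¹ (S.β (m+1)) : ℝ)
      have h1 : S.pa₁ < S.β (m+1) := by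
        rw [← Subtype.coe_lt_coe, coe_pa₁]; exact ih
      have h2 : S.A⁻¹ S.pa₁ < S.A⁻¹ (S.β (m+1)) := (Homeo.lt_iff_lt _).mpr h1
      rw [S.Ainv_fix_pa₁] at h2
      exact h2

lemma β_le_pb₁ : ∀ n, S.β (n+1) ≤ S.pb₁ := by
  intro n
  induction n with
  | zero => exact le_refl _
  | succ m ih =>
    have : S.β (m+2) = S.A⁻¹ (S.β (m+1)) := rfl
    rw [this]
    exact le_trans (S.Ainv_le _) ih

lemma β_succ_lt : ∀ n, S.β (n+1) < S.β n := by
  intro n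
  rcases n with _ | m
  · rw [← Subtype.coe_lt_coe]; exact S.b₁_lt_b₂
  · rw [S.β_succ (by omega : 1 ≤ m+1)]
    have hlt : S.β (m+1) < S.A (S.β (m+1)) := by
      rw [S.A_gt_iff]
      refine ⟨S.β_gt_a₁ (m+1), ?_⟩
      calc ((S.β (m+1) : unitInterval) : ℝ) ≤ S.b₁ := Subtype.coe_le_coe.mpr (S.β_le_pb₁ m)
        _ < S.b₂ := S.b₁_lt_b₂
    have := (Homeo.lt_iff_lt (S.A⁻¹)).mpr hlt
    rwa [Homeo.inv_apply_self'] at this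

lemma β_anti {m n : ℕ} (h : m ≤ n) : S.β n ≤ S.β m := by
  induction n with
  | zero => rw [Nat.le_zero.mp h]
  | succ k ih =>
    rcases Nat.lt_or_ge m (k+1) with h2 | h2
    · exact le_trans (le_of_lt (S.β_succ_lt k)) (ih (by omega))
    · have : m = k + 1 := by omega
      rw [this]

lemma Bh_ge : ∀ n (t : unitInterval), t ≤ S.Bh n t := by
  intro n
  induction n with
  | zero => exact S.A_ge
  | succ m ih =>
    rcases m with _ | m
    · exact Bump.ge S.hf₁
    · intro t
      show t ≤ (S.A⁻¹ * S.Bh (m+1) * S.A) t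
      rw [Homeo.mul_apply, Homeo.mul_apply]
      have h1 : S.A t ≤ S.Bh (m+1) (S.A t) := ih (S.A t)
      have h2 := (Homeo.le_iff_le (S.A⁻¹)).mpr h1
      rwa [Homeo.inv_apply_self'] at h2

lemma Bh_gt_iff : ∀ n (t : unitInterval),
    t < S.Bh n t ↔ S.a₁ < (t : ℝ) ∧ t < S.β n := by
  intro n
  induction n with
  | zero =>
    intro t
    show t < S.A t ↔ S.a₁ < (t : ℝ) ∧ t < S.pb₂
    rw [S.A_gt_iff t]
    constructor
    · rintro ⟨h1, h2⟩; exact ⟨h1, by rw [← Subtype.coe_lt_coe, coe_pb₂] at *; exact h2⟩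
    · rintro ⟨h1, h2⟩; exact ⟨h1, by rw [← Subtype.coe_lt_coe, coe_pb₂] at h2; exact h2⟩
  | succ m ih =>
    rcases m with _ | m
    · intro t
      show t < S.f₁ t ↔ S.a₁ < (t : ℝ) ∧ t < S.pb₁
      rw [Bump.gt_iff S.hf₁ t]
      constructor
      · rintro ⟨h1, h2⟩; exact ⟨h1, by rw [← Subtype.coe_lt_coe, coe_pb₁] at *; exact h2⟩
      · rintro ⟨h1, h2⟩; exact ⟨h1, by rw [← Subtype.coe_lt_coe, coe_pb₁] at h2; exact h2⟩
    · intro t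
      show t < (S.A⁻¹ * S.Bh (m+1) * S.A) t ↔ _
      rw [Homeo.mul_apply, Homeo.mul_apply]
      have e1 : t < S.A⁻¹ (S.Bh (m+1) (S.A t)) ↔ S.A t < S.Bh (m+1) (S.A t) := by
        constructor
        · intro h
          have := (Homeo.lt_iff_lt S.A).mpr h
          rwa [Homeo.apply_inv_self'] at this
        · intro h
          have := (Homeo.lt_iff_lt (S.A⁻¹)).mpr h
          rwa [Homeo.inv_apply_self'] at this
      rw [e1, ih (S.A t)]
      have e2 : S.a₁ < ((S.A t : unitInterval) : ℝ) ↔ S.a₁ < (t : ℝ) := by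
        constructor
        · intro h
          by_contra hc
          push_neg at hc
          rw [S.A_fix_of_le hc] at h
          exact absurd h (not_lt.mpr hc)
        · intro h
          calc S.a₁ < (t : ℝ) := h
            _ ≤ _ := Subtype.coe_le_coe.mpr (S.A_ge t)
      have e3 : S.A t < S.β (m+1) ↔ t < S.β (m+2) := by
        rw [S.β_succ (by omega : 1 ≤ m+1)]
        constructor
        · intro h
          have := (Homeo.lt_iff_lt (S.A⁻¹)).mpr h
          rwa [Homeo.inv_apply_self'] at this
        · intro h
          have := (Homeo.lt_iff_lt S.A).mpr h
          rwa [Homeo.apply_inv_self'] at this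
      rw [e2, e3]

lemma Bh_fix_of_ge {n : ℕ} {t : unitInterval} (h : S.β n ≤ t) : S.Bh n t = t := by
  have h1 : ¬ t < S.Bh n t := by
    rw [S.Bh_gt_iff n t]
    rintro ⟨-, h2⟩
    exact absurd h (not_le.mpr h2)
  rcases lt_or_eq_of_le (S.Bh_ge n t) with h2 | h2
  · exact absurd h2 h1
  · exact h2.symm

/-- Product of the bump homeomorphisms indexed by a list. -/
def WH (l : List ℕ) : Homeo := (l.map S.Bh).prod

@[simp] lemma WH_nil : S.WH [] = 1 := rfl
@[simp] lemma WH_cons (k : ℕ) (l : List ℕ) : S.WH (k :: l) = S.Bh k * S.WH l := by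
  simp [WH]

lemma WH_ge (l : List ℕ) (t : unitInterval) : t ≤ S.WH l t := by
  induction l generalizing t with
  | nil => simp
  | cons h tl ih =>
    rw [WH_cons, Homeo.mul_apply]
    exact le_trans (ih t) (S.Bh_ge h (S.WH tl t))

lemma WH_fix {m : ℕ} {t : unitInterval} (h : S.β m ≤ t) :
    ∀ {l : List ℕ}, (∀ j ∈ l, m ≤ j) → S.WH l t = t := by
  intro l
  induction l with
  | nil => intro _; rfl
  | cons hd tl ih =>
    intro hall
    rw [WH_cons, Homeo.mul_apply, ih (fun j hj => hall j (List.mem_cons_of_mem _ hj))]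
    exact S.Bh_fix_of_ge (le_trans (S.β_anti (hall hd (List.mem_cons_self))) h)

lemma WH_moves {k : ℕ} {l : List ℕ} {t : unitInterval}
    (h1 : S.β (k+1) < t) (h2 : t < S.β k) : t < S.WH (k :: l) t := by
  rw [WH_cons, Homeo.mul_apply]
  set s := S.WH l t with hs
  have hst : t ≤ s := S.WH_ge l t
  rcases lt_or_eq_of_le hst with h3 | h3
  · exact lt_of_lt_of_le h3 (S.Bh_ge k s)
  · rw [← h3]
    rw [S.Bh_gt_iff k t]
    refine ⟨lt_trans (S.β_gt_a₁ (k+1)) ?_, h2⟩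
    exact Subtype.coe_lt_coe.mpr h1

/-- midpoint of two points of the unit interval -/
noncomputable def mid (u v : unitInterval) : unitInterval :=
  ⟨((u : ℝ) + (v : ℝ))/2, by
    constructor
    · have := u.2.1; have := v.2.1; linarith
    · have := u.2.2; have := v.2.2; linarith⟩

lemma mid_lt {u v : unitInterval} (h : u < v) : u < mid u v ∧ mid u v < v := by
  rw [← Subtype.coe_lt_coe] at h
  constructor
  · rw [← Subtype.coe_lt_coe]
    show (u : ℝ) < ((u : ℝ) + (v : ℝ))/2
    linarith
  · rw [← Subtype.coe_lt_coe]
    show ((u : ℝ) + (v : ℝ))/2 < (v : ℝ)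
    linarith

/-- A sorted nonempty word moves some point. -/
lemma WH_ne_one {k : ℕ} {l : List ℕ} : S.WH (k :: l) ≠ 1 := by
  intro hcon
  set t := mid (S.β (k+1)) (S.β k) with ht
  obtain ⟨h1, h2⟩ := mid_lt (S.β_succ_lt k)
  have := S.WH_moves (l := l) h1 h2
  rw [hcon] at this
  exact lt_irrefl _ this

/-- Key injectivity on sorted words. -/
lemma WH_sorted_inj : ∀ (N : ℕ) (p q : List ℕ), p.length + q.length ≤ N →
    p.Pairwise (· ≤ ·) → q.Pairwise (· ≤ ·) → S.WH p = S.WH q → p = q := by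
  intro N
  induction N with
  | zero =>
    intro p q hlen _ _ _
    have hp0 : p = [] := List.length_eq_zero_iff.mp (by omega)
    have hq0 : q = [] := List.length_eq_zero_iff.mp (by omega)
    rw [hp0, hq0]
  | succ N ih =>
    intro p q hlen hp hq heq
    rcases p with _ | ⟨k, p'⟩
    · rcases q with _ | ⟨m, q'⟩
      · rfl
      · exact absurd heq.symm S.WH_ne_one
    · rcases q with _ | ⟨m, q'⟩
      · exact absurd heq S.WH_ne_one
      · rcases lt_trichotomy k m with hkm | hkm | hkm
        · -- k < m : contradiction, WH p moves point fixed by WH q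
          exfalso
          set t := mid (S.β (k+1)) (S.β k) with ht
          obtain ⟨h1, h2⟩ := mid_lt (S.β_succ_lt k)
          have hmove : t < S.WH (k :: p') t := S.WH_moves h1 h2
          have hfix : S.WH (m :: q') t = t := by
            apply S.WH_fix (le_of_lt h1)
            intro j hj
            rcases List.mem_cons.mp hj with h | h
            · omega
            · have := (List.pairwise_cons.mp hq).1 j h
              omega
          rw [heq, hfix] at hmove
          exact lt_irrefl _ hmove
        · -- equal heads: cancel
          subst hkm
          have hcancel : S.WH p' = S.WH q' := by
            have : S.Bh k * S.WH p' = S.Bh k * S.WH q' := by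
              rw [← WH_cons, ← WH_cons, heq]
            exact mul_left_cancel this
          have := ih p' q' (by simp at hlen ⊢; omega)
            (List.pairwise_cons.mp hp).2 (List.pairwise_cons.mp hq).2 hcancel
          rw [this]
        · -- m < k : symmetric
          exfalso
          set t := mid (S.β (m+1)) (S.β m) with ht
          obtain ⟨h1, h2⟩ := mid_lt (S.β_succ_lt m)
          have hmove : t < S.WH (m :: q') t := S.WH_moves h1 h2
          have hfix : S.WH (k :: p') t = t := by
            apply S.WH_fix (le_of_lt h1)
            intro j hj
            rcases List.mem_cons.mp hj with h | h
            · omega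
            · have := (List.pairwise_cons.mp hp).1 j h
              omega
          rw [← heq, hfix] at hmove
          exact lt_irrefl _ hmove

lemma Homeo.commute_of_disj {u v : Homeo} (h : ∀ t, u t ≠ t → v t = t) : u * v = v * u := by
  have key : ∀ t, u (v t) = v (u t) := by
    intro t
    by_cases hu : u t = t
    · by_cases hv : v t = t
      · rw [hv, hu, hv]
      · have hvv : v (v t) ≠ v t := fun e => hv (Homeo.injective v e)
        have huv : u (v t) = v t := by
          by_contra hc
          exact hvv (h (v t) hc)
        rw [huv, hu]
    · have hvt : v t = t := h t hu
      have huu : u (u t) ≠ u t := fun e => hu (Homeo.injective u e)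
      have hvu : v (u t) = u t := h (u t) huu
      rw [hvt, hvu]
  exact RelIso.ext (fun t => by
    rw [Homeo.mul_apply, Homeo.mul_apply]
    exact key t)

/-- If `f₂` moves `f₁⁻¹ t`, then `A t = f₂ t > b₁`. -/
lemma moved_right {t : unitInterval} (h : S.f₂ (S.f₁⁻¹ t) ≠ S.f₁⁻¹ t) :
    S.b₁ < ((S.A t : unitInterval) : ℝ) := by
  have h1 : S.a₂ < ((S.f₁⁻¹ t : unitInterval) : ℝ) := ((Bump.ne_iff S.hf₂ _).mp h).1
  -- t > f₁ a₂ ≥ f₁ c₁ ≥ c₂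
  have h2 : S.pa₂ < S.f₁⁻¹ t := by rw [← Subtype.coe_lt_coe, coe_pa₂]; exact h1
  have h3 : S.f₁ S.pa₂ < t := by
    have := (Homeo.lt_iff_lt S.f₁).mpr h2
    rwa [Homeo.apply_inv_self'] at this
  have h4 : S.c₁ ≤ S.pa₂ := by rw [← Subtype.coe_le_coe, coe_pa₂]; exact S.k1
  have h5 : ((S.c₂ : unitInterval) : ℝ) < (t : ℝ) := by
    calc ((S.c₂ : unitInterval) : ℝ) ≤ ((S.f₁ S.c₁ : unitInterval) : ℝ) := S.k2
      _ ≤ ((S.f₁ S.pa₂ : unitInterval) : ℝ) :=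
        Subtype.coe_le_coe.mpr ((Homeo.le_iff_le S.f₁).mpr h4)
      _ < (t : ℝ) := Subtype.coe_lt_coe.mpr h3
  have h6 : S.f₂ S.c₂ < S.f₂ t := (Homeo.lt_iff_lt S.f₂).mpr (Subtype.coe_lt_coe.mp h5)
  have h7 : S.b₁ < ((S.f₂ t : unitInterval) : ℝ) :=
    lt_of_le_of_lt S.k3 (Subtype.coe_lt_coe.mpr h6)
  have h8 : S.A t = S.f₂ t := by
    show (S.f₁ * S.f₂) t = S.f₂ t
    rw [Homeo.mul_apply]
    exact Bump.fix_of_ge S.hf₁ (le_of_lt h7)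
  rw [h8]
  exact h7

lemma relhold : ∀ r ∈ thompsonFRels, FreeGroup.lift (![S.A, S.B]) r = 1 := by
  intro r hr
  simp only [thompsonFRels, Set.mem_insert_iff, Set.mem_singleton_iff] at hr
  rcases hr with rfl | rfl
  · simp only [map_mul, map_inv, map_pow, FreeGroup.lift_apply_of, Matrix.cons_val_zero,
      Matrix.cons_val_one, Matrix.head_cons]
    have hcomm : (S.A⁻¹ * S.B * S.A) * (S.A * S.B⁻¹) = (S.A * S.B⁻¹) * (S.A⁻¹ * S.B * S.A) := by
      apply Homeo.commute_of_disj
      intro t hne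
      -- hne : (A⁻¹ * B * A) t ≠ t, so B (A t) ≠ A t
      have hB : S.B (S.A t) ≠ S.A t := by
        intro hfix
        apply hne
        rw [Homeo.mul_apply, Homeo.mul_apply, hfix, Homeo.inv_apply_self']
      have hb := (Bump.ne_iff S.hf₁ _).mp hB
      -- show (A * B⁻¹) t = t
      have hBinv : S.B⁻¹ t = S.f₁⁻¹ t := rfl
      rw [Homeo.mul_apply, hBinv]
      have hfix : S.f₂ (S.f₁⁻¹ t) = S.f₁⁻¹ t := by
        by_contra hc
        exact absurd hb.2 (not_lt.mpr (le_of_lt (S.moved_right hc)))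
      show (S.f₁ * S.f₂) (S.f₁⁻¹ t) = t
      rw [Homeo.mul_apply, hfix, Homeo.apply_inv_self']
    calc (S.A * S.B⁻¹)⁻¹ * (S.A⁻¹ * S.B * S.A)⁻¹ * (S.A * S.B⁻¹) * (S.A⁻¹ * S.B * S.A)
        = (S.A * S.B⁻¹)⁻¹ * (S.A⁻¹ * S.B * S.A)⁻¹ *
          ((S.A * S.B⁻¹) * (S.A⁻¹ * S.B * S.A)) := by rw [mul_assoc]
      _ = (S.A * S.B⁻¹)⁻¹ * (S.A⁻¹ * S.B * S.A)⁻¹ *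
          ((S.A⁻¹ * S.B * S.A) * (S.A * S.B⁻¹)) := by rw [hcomm]
      _ = 1 := by group
  · simp only [map_mul, map_inv, map_pow, FreeGroup.lift_apply_of, Matrix.cons_val_zero,
      Matrix.cons_val_one, Matrix.head_cons]
    have hcomm : (S.A⁻¹ ^ 2 * S.B * S.A ^ 2) * (S.A * S.B⁻¹)
        = (S.A * S.B⁻¹) * (S.A⁻¹ ^ 2 * S.B * S.A ^ 2) := by
      apply Homeo.commute_of_disj
      intro t hne
      have happ : (S.A⁻¹ ^ 2 * S.B * S.A ^ 2) t = S.A⁻¹ (S.A⁻¹ (S.B (S.A (S.A t)))) := by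
        rw [pow_two, pow_two]
        rfl
      have hB : S.B (S.A (S.A t)) ≠ S.A (S.A t) := by
        intro hfix
        apply hne
        rw [happ, hfix, Homeo.inv_apply_self', Homeo.inv_apply_self']
      have hb := (Bump.ne_iff S.hf₁ _).mp hB
      have hBinv : S.B⁻¹ t = S.f₁⁻¹ t := rfl
      rw [Homeo.mul_apply, hBinv]
      have hfix : S.f₂ (S.f₁⁻¹ t) = S.f₁⁻¹ t := by
        by_contra hc
        have h1 : S.b₁ < ((S.A t : unitInterval) : ℝ) := S.moved_right hc
        have h2 : S.A t ≤ S.A (S.A t) := S.A_ge (S.A t)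
        have h3 : S.b₁ < ((S.A (S.A t) : unitInterval) : ℝ) :=
          lt_of_lt_of_le h1 (Subtype.coe_le_coe.mpr h2)
        exact absurd hb.2 (not_lt.mpr (le_of_lt h3))
      show (S.f₁ * S.f₂) (S.f₁⁻¹ t) = t
      rw [Homeo.mul_apply, hfix, Homeo.apply_inv_self']
    calc (S.A * S.B⁻¹)⁻¹ * (S.A⁻¹ ^ 2 * S.B * S.A ^ 2)⁻¹ * (S.A * S.B⁻¹) *
          (S.A⁻¹ ^ 2 * S.B * S.A ^ 2)
        = (S.A * S.B⁻¹)⁻¹ * (S.A⁻¹ ^ 2 * S.B * S.A ^ 2)⁻¹ *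
          ((S.A * S.B⁻¹) * (S.A⁻¹ ^ 2 * S.B * S.A ^ 2)) := by rw [mul_assoc]
      _ = (S.A * S.B⁻¹)⁻¹ * (S.A⁻¹ ^ 2 * S.B * S.A ^ 2)⁻¹ *
          ((S.A⁻¹ ^ 2 * S.B * S.A ^ 2) * (S.A * S.B⁻¹)) := by rw [hcomm]
      _ = 1 := by group

/-- The homomorphism from the presented group to `Homeo`. -/
noncomputable def Φ : TF.F →* Homeo := PresentedGroup.toGroup S.relhold

lemma Φ_a : S.Φ TF.a = S.A := by
  show S.Φ (PresentedGroup.of 0) = S.A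
  rw [Φ, PresentedGroup.toGroup.of]
  simp

lemma Φ_b : S.Φ TF.b = S.B := by
  show S.Φ (PresentedGroup.of 1) = S.B
  rw [Φ, PresentedGroup.toGroup.of]
  simp

lemma Φ_x : ∀ n, S.Φ (TF.x n) = S.Bh n := by
  have key : ∀ n, S.Φ (TF.x n) = S.Bh n ∧ S.Φ (TF.x (n+1)) = S.Bh (n+1) := by
    intro n
    induction n with
    | zero => exact ⟨S.Φ_a, S.Φ_b⟩
    | succ m ih =>
      refine ⟨ih.2, ?_⟩
      have e1 : TF.x (m+2) = TF.a⁻¹ * TF.x (m+1) * TF.a := rfl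
      have e2 : S.Bh (m+2) = S.A⁻¹ * S.Bh (m+1) * S.A := rfl
      rw [e1, e2, map_mul, map_mul, map_inv, S.Φ_a, ih.2]
  exact fun n => (key n).1

lemma Φ_w : ∀ l, S.Φ (TF.w l) = S.WH l := by
  intro l
  induction l with
  | nil => simp [TF.w_nil, WH_nil]
  | cons h t ih => rw [TF.w_cons, WH_cons, map_mul, S.Φ_x, ih]

lemma Φ_inj : Function.Injective S.Φ := by
  rw [injective_iff_map_eq_one]
  intro g hg
  obtain ⟨p, q, rfl⟩ := TF.frac g
  rw [map_mul, map_inv, S.Φ_w, S.Φ_w] at hg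
  have heq : S.WH p = S.WH q := by
    have := mul_inv_eq_one.mp hg
    exact this
  have heqs : S.WH (TF.sortW p) = S.WH (TF.sortW q) := by
    rw [← S.Φ_w, ← S.Φ_w, TF.w_sortW, TF.w_sortW, S.Φ_w, S.Φ_w]
    exact heq
  have hs : TF.sortW p = TF.sortW q :=
    S.WH_sorted_inj ((TF.sortW p).length + (TF.sortW q).length) _ _ (le_refl _)
      (TF.sortW_sorted p) (TF.sortW_sorted q) heqs
  have hw : TF.w p = TF.w q := by
    rw [← TF.w_sortW p, ← TF.w_sortW q, hs]
  rw [hw]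
  group

lemma Φ_range : S.Φ.range = Subgroup.closure {S.f₁, S.f₂} := by
  have h1 : S.Φ.range = Subgroup.closure (S.Φ '' Set.range (PresentedGroup.of)) := by
    rw [MonoidHom.range_eq_map, ← PresentedGroup.closure_range_of thompsonFRels,
      MonoidHom.map_closure]
  rw [h1]
  have h2 : S.Φ '' Set.range (PresentedGroup.of) = {S.A, S.B} := by
    ext y
    constructor
    · rintro ⟨z, ⟨i, rfl⟩, rfl⟩
      fin_cases i
      · left; exact S.Φ_a
      · right; exact S.Φ_b
    · rintro (rfl | rfl)
      · exact ⟨PresentedGroup.of 0, ⟨0, rfl⟩, S.Φ_a⟩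
      · exact ⟨PresentedGroup.of 1, ⟨1, rfl⟩, S.Φ_b⟩
  rw [h2]
  apply le_antisymm
  · rw [Subgroup.closure_le]
    rintro y (rfl | rfl)
    · show S.A ∈ _
      have : S.A = S.f₁ * S.f₂ := rfl
      rw [this]
      exact Subgroup.mul_mem _
        (Subgroup.subset_closure (Set.mem_insert _ _))
        (Subgroup.subset_closure (Set.mem_insert_of_mem _ rfl))
    · exact Subgroup.subset_closure (Set.mem_insert _ _)
  · rw [Subgroup.closure_le]
    rintro y (rfl | rfl)
    · show S.f₁ ∈ _
      exact Subgroup.subset_closure (Set.mem_insert_of_mem _ rfl)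
    · show S.f₂ ∈ _
      have : S.f₂ = S.B⁻¹ * S.A := by
        show S.f₂ = S.f₁⁻¹ * (S.f₁ * S.f₂)
        group
      rw [this]
      exact Subgroup.mul_mem _
        (Subgroup.inv_mem _ (Subgroup.subset_closure (Set.mem_insert_of_mem _ rfl)))
        (Subgroup.subset_closure (Set.mem_insert _ _))

/-- The main isomorphism. -/
noncomputable def iso :
    (Subgroup.closure {S.f₁, S.f₂} : Subgroup Homeo) ≃* PresentedGroup thompsonFRels :=
  ((MonoidHom.ofInjective S.Φ_inj).trans (MulEquiv.subgroupCongr S.Φ_range)).symm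

end Setup

lemma Bump.apply_lt_right {f : Homeo} {A B : ℝ} (hf : IsPosBump f A B) {t : unitInterval}
    (h : (t : ℝ) < B) : ((f t : unitInterval) : ℝ) < B := by
  have hB0 : 0 ≤ B := le_of_lt (lt_of_le_of_lt hf.1 hf.2.1)
  have hfix : f ⟨B, hB0, hf.2.2.1⟩ = ⟨B, hB0, hf.2.2.1⟩ :=
    Bump.fix_of_ge hf (le_refl _)
  have hlt : f t < f ⟨B, hB0, hf.2.2.1⟩ :=
    (Homeo.lt_iff_lt f).mpr (by rw [← Subtype.coe_lt_coe]; exact h)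
  rw [hfix] at hlt
  exact Subtype.coe_lt_coe.mpr hlt


/-- If `{f₁, f₂}` is a geometrically fast pair of positive bumps whose feet are pairwise
disjoint and ordered `L₁ < L₂ < R₁ < R₂`, then `⟨f₁, f₂⟩` is isomorphic to Thompson's
group `F` (presented by two generators and two commutator relations). -/
theorem fast_pair_overlapping_iso_thompsonF
    (f₁ f₂ : Homeo) (a₁ b₁ a₂ b₂ : ℝ) (c₁ c₂ : unitInterval)
    (hf₁ : IsPosBump f₁ a₁ b₁) (hf₂ : IsPosBump f₂ a₂ b₂)
    (hc₁ : a₁ < (c₁ : ℝ) ∧ (c₁ : ℝ) < b₁) (hc₂ : a₂ < (c₂ : ℝ) ∧ (c₂ : ℝ) < b₂)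
    -- the four feet
    (L₁ R₁ L₂ R₂ : Set ℝ)
    (hL₁ : L₁ = Set.Ioo a₁ (c₁ : ℝ)) (hR₁ : R₁ = Set.Ico ((f₁ c₁ : unitInterval) : ℝ) b₁)
    (hL₂ : L₂ = Set.Ioo a₂ (c₂ : ℝ)) (hR₂ : R₂ = Set.Ico ((f₂ c₂ : unitInterval) : ℝ) b₂)
    -- pairwise disjoint and ordered L₁ < L₂ < R₁ < R₂
    (hd : Set.Pairwise {0, 1, 2, 3} (fun i j => Disjoint (![L₁, L₂, R₁, R₂] i) (![L₁, L₂, R₁, R₂] j)))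
    (ho₁ : Precedes L₁ L₂) (ho₂ : Precedes L₂ R₁) (ho₃ : Precedes R₁ R₂) :
    Nonempty ((Subgroup.closure {f₁, f₂} : Subgroup Homeo) ≃* PresentedGroup thompsonFRels) := by
  subst hL₁ hR₁ hL₂ hR₂
  have k1 : (c₁ : ℝ) ≤ a₂ := by
    by_contra hcon
    push_neg at hcon
    set y : ℝ := (a₂ + min (c₁ : ℝ) (c₂ : ℝ))/2 with hy
    have hmin : a₂ < min (c₁ : ℝ) (c₂ : ℝ) := lt_min hcon hc₂.1
    have hy1 : a₂ < y := by rw [hy]; linarith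
    have hy2 : y < (c₂ : ℝ) := by
      have : y < min (c₁ : ℝ) (c₂ : ℝ) := by rw [hy]; linarith
      exact lt_of_lt_of_le this (min_le_right _ _)
    have hy3 : y < (c₁ : ℝ) := by
      have : y < min (c₁ : ℝ) (c₂ : ℝ) := by rw [hy]; linarith
      exact lt_of_lt_of_le this (min_le_left _ _)
    rcases le_or_gt y a₁ with h | h
    · have hx : (a₁ + (c₁:ℝ))/2 ∈ Set.Ioo a₁ (c₁ : ℝ) :=
        Set.mem_Ioo.mpr ⟨by linarith [hc₁.1], by linarith [hc₁.1]⟩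
      have := ho₁ _ hx y (Set.mem_Ioo.mpr ⟨hy1, hy2⟩)
      have hb : a₁ < (a₁ + (c₁:ℝ))/2 := by linarith [hc₁.1]
      linarith
    · have := ho₁ y (Set.mem_Ioo.mpr ⟨h, hy3⟩) y (Set.mem_Ioo.mpr ⟨hy1, hy2⟩)
      exact lt_irrefl _ this
  have hfc1b : ((f₁ c₁ : unitInterval) : ℝ) < b₁ := Bump.apply_lt_right hf₁ hc₁.2
  have hfc2b : ((f₂ c₂ : unitInterval) : ℝ) < b₂ := Bump.apply_lt_right hf₂ hc₂.2
  have k2 : (c₂ : ℝ) ≤ ((f₁ c₁ : unitInterval) : ℝ) := by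
    by_contra hcon
    push_neg at hcon
    have hmem : ((f₁ c₁ : unitInterval) : ℝ) ∈ Set.Ico ((f₁ c₁ : unitInterval) : ℝ) b₁ :=
      Set.mem_Ico.mpr ⟨le_refl _, hfc1b⟩
    rcases le_or_gt ((f₁ c₁ : unitInterval) : ℝ) a₂ with h | h
    · have hx : (a₂ + (c₂:ℝ))/2 ∈ Set.Ioo a₂ (c₂ : ℝ) := by
        refine Set.mem_Ioo.mpr ⟨by linarith [hc₂.1], by linarith [hc₂.1]⟩
      have := ho₂ _ hx _ hmem
      have : (a₂ + (c₂:ℝ))/2 < a₂ := lt_of_lt_of_le this h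
      linarith [hc₂.1]
    · have := ho₂ _ (Set.mem_Ioo.mpr ⟨h, hcon⟩) _ hmem
      exact lt_irrefl _ this
  have k3 : b₁ ≤ ((f₂ c₂ : unitInterval) : ℝ) := by
    by_contra hcon
    push_neg at hcon
    have hmem2 : ((f₂ c₂ : unitInterval) : ℝ) ∈ Set.Ico ((f₂ c₂ : unitInterval) : ℝ) b₂ :=
      Set.mem_Ico.mpr ⟨le_refl _, hfc2b⟩
    rcases le_or_gt ((f₁ c₁ : unitInterval) : ℝ) ((f₂ c₂ : unitInterval) : ℝ) with h | h
    · have := ho₃ _ (Set.mem_Ico.mpr ⟨h, hcon⟩) _ hmem2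
      exact lt_irrefl _ this
    · have := ho₃ _ (Set.mem_Ico.mpr ⟨le_refl _, hfc1b⟩) _ hmem2
      exact absurd this (not_lt.mpr (le_of_lt h))
  let S : Setup := ⟨f₁, f₂, a₁, b₁, a₂, b₂, c₁, c₂, hf₁, hf₂,
    hc₁.1, hc₁.2, hc₂.1, hc₂.2, k1, k2, k3⟩
  exact ⟨S.iso⟩
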